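/- Let M be the 2g×2g integer block matrix M = [[0, A+I],[-(A+I), 0]], where A is the g×g all-ones matrix. Then the set of vectors x ∈ ℚ^{2g}, taken modulo ℤ^{2g}, satisfying xᵀ M y ∈ ℤ for all y ∈ ℤ^{2g}, is exactly the subgroup {(a,...,a,b,...,b) mod ℤ^{2g} : a, b ∈ (1/(g+1))ℤ/ℤ}; in particular this group is isomorphic to (ℤ/(g+1)ℤ)². -/
import Mathlib
open Matrix

/-- For `M = [[0, A+I],[-(A+I),0]]` with `A` the `g×g` all-ones matrix,
a vector `x ∈ ℚ^{2g}` satisfies `xᵀ M y ∈ ℤ` for all `y ∈ ℤ^{2g}` iff, modulo `ℤ^{2g}`,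
`x = (a,…,a,b,…,b)` with `a, b ∈ (1/(g+1))ℤ/ℤ`. -/
theorem stmt0 (g : ℕ) (hg : 1 ≤ g)
    (A : Matrix (Fin g) (Fin g) ℚ) (hA : ∀ i j, A i j = 1)
    (M : Matrix (Fin g ⊕ Fin g) (Fin g ⊕ Fin g) ℚ)
    (hM : M = Matrix.fromBlocks 0 (A + 1) (-(A + 1)) 0)
    (x : Fin g ⊕ Fin g → ℚ) :
    (∀ y : Fin g ⊕ Fin g → ℤ,
        ∃ k : ℤ, x ⬝ᵥ M.mulVec (fun i => (y i : ℚ)) = (k : ℚ)) ↔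
      ∃ a b : ℚ,
        (∃ k : ℤ, ((g : ℚ) + 1) * a = (k : ℚ)) ∧
        (∃ k : ℤ, ((g : ℚ) + 1) * b = (k : ℚ)) ∧
        (∀ i : Fin g, ∃ k : ℤ, x (Sum.inl i) - a = (k : ℚ)) ∧
        (∀ i : Fin g, ∃ k : ℤ, x (Sum.inr i) - b = (k : ℚ)) := by
  set S1 : ℚ := ∑ i, x (Sum.inl i) with hS1def
  set S2 : ℚ := ∑ i, x (Sum.inr i) with hS2def
  have hcl : ∀ j, (x ᵥ* M) (Sum.inl j) = -(S2 + x (Sum.inr j)) := by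
    intro j
    subst hM
    simp [hS2def, vecMul, dotProduct, Fintype.sum_sum_type, fromBlocks, hA, Matrix.one_apply,
      mul_add, Finset.sum_add_distrib, mul_ite, Finset.sum_ite_eq', neg_add]
  have hcr : ∀ j, (x ᵥ* M) (Sum.inr j) = S1 + x (Sum.inl j) := by
    intro j
    subst hM
    simp [hS1def, vecMul, dotProduct, Fintype.sum_sum_type, fromBlocks, hA, Matrix.one_apply,
      mul_add, Finset.sum_add_distrib, mul_ite, Finset.sum_ite_eq']
  have key : ∀ y : Fin g ⊕ Fin g → ℤ,
      x ⬝ᵥ M.mulVec (fun i => (y i : ℚ)) = ∑ j, (x ᵥ* M) j * (y j : ℚ) := by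
    intro y
    rw [Matrix.dotProduct_mulVec]
    rfl
  constructor
  · intro h
    have hent : ∀ j : Fin g ⊕ Fin g, ∃ k : ℤ, (x ᵥ* M) j = (k : ℚ) := by
      intro j
      obtain ⟨k, hk⟩ := h (Pi.single j 1)
      refine ⟨k, ?_⟩
      rw [key] at hk
      simpa [Pi.single_apply, mul_ite, Finset.sum_ite_eq'] using hk
    have h1 : ∀ j : Fin g, ∃ k : ℤ, S1 + x (Sum.inl j) = (k : ℚ) := by
      intro j; obtain ⟨k, hk⟩ := hent (Sum.inr j); exact ⟨k, by rw [← hcr j]; exact hk⟩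
    have h2 : ∀ j : Fin g, ∃ k : ℤ, S2 + x (Sum.inr j) = (k : ℚ) := by
      intro j
      obtain ⟨k, hk⟩ := hent (Sum.inl j)
      exact ⟨-k, by rw [hcl j] at hk; push_cast; linarith⟩
    choose f1 hf1 using h1
    choose f2 hf2 using h2
    refine ⟨-S1, -S2, ⟨-∑ j, f1 j, ?_⟩, ⟨-∑ j, f2 j, ?_⟩, fun i => ⟨f1 i, by
        rw [← hf1 i]; ring⟩, fun i => ⟨f2 i, by rw [← hf2 i]; ring⟩⟩
    · have : (∑ j, (f1 j : ℚ)) = ((g : ℚ) + 1) * S1 := by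
        have e : (∑ j, (f1 j : ℚ)) = ∑ j, (S1 + x (Sum.inl j)) :=
          Finset.sum_congr rfl fun j _ => (hf1 j).symm
        rw [e, Finset.sum_add_distrib, Finset.sum_const, Finset.card_univ, Fintype.card_fin,
          nsmul_eq_mul, ← hS1def]
        ring
      push_cast
      linarith
    · have : (∑ j, (f2 j : ℚ)) = ((g : ℚ) + 1) * S2 := by
        have e : (∑ j, (f2 j : ℚ)) = ∑ j, (S2 + x (Sum.inr j)) :=
          Finset.sum_congr rfl fun j _ => (hf2 j).symm
        rw [e, Finset.sum_add_distrib, Finset.sum_const, Finset.card_univ, Fintype.card_fin,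
          nsmul_eq_mul, ← hS2def]
        ring
      push_cast
      linarith
  · rintro ⟨a, b, ⟨ka, hka⟩, ⟨kb, hkb⟩, hxa, hxb⟩
    choose fa hfa using hxa
    choose fb hfb using hxb
    have hS1 : S1 = (g : ℚ) * a + ∑ i, (fa i : ℚ) := by
      rw [hS1def, show (∑ i, x (Sum.inl i)) = ∑ i, (a + (fa i : ℚ)) from
        Finset.sum_congr rfl (fun i _ => by rw [← hfa i]; ring), Finset.sum_add_distrib,
        Finset.sum_const, Finset.card_univ, Fintype.card_fin, nsmul_eq_mul]
    have hS2 : S2 = (g : ℚ) * b + ∑ i, (fb i : ℚ) := by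
      rw [hS2def, show (∑ i, x (Sum.inr i)) = ∑ i, (b + (fb i : ℚ)) from
        Finset.sum_congr rfl (fun i _ => by rw [← hfb i]; ring), Finset.sum_add_distrib,
        Finset.sum_const, Finset.card_univ, Fintype.card_fin, nsmul_eq_mul]
    have hcint : ∀ j : Fin g ⊕ Fin g, ∃ k : ℤ, (x ᵥ* M) j = (k : ℚ) := by
      rintro (j | j)
      · refine ⟨-(kb + ∑ i, fb i + fb j), ?_⟩
        rw [hcl j]
        push_cast
        linear_combination -hS2 - hfb j - hkb
      · refine ⟨ka + ∑ i, fa i + fa j, ?_⟩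
        rw [hcr j]
        push_cast
        linear_combination hS1 + hfa j + hka
    choose f hf using hcint
    intro y
    refine ⟨∑ j, f j * y j, ?_⟩
    rw [key]
    push_cast
    exact Finset.sum_congr rfl fun j _ => by rw [hf j]
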